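/- arXiv:2209.09321 — 4 statements merged into one kernel-verified Lean document; each statement's English description precedes it below -/
import Mathlib

section
/- Let Z1 = {c1 + G1·α : α ∈ [-1,1]^{p1}} and Z2 = {c2 + G2·α : α ∈ [-1,1]^{p2}} be zonotopes in ℝ^n with p2 ≥ p1. Write G2' ∈ ℝ^{n×p1} for the first p1 columns of G2 and G2'' ∈ ℝ^{n×(p2−p1)} for the remaining columns. Then the linear combination linComb(Z1,Z2) = {λ·s1 + (1−λ)·s2 : s1 ∈ Z1, s2 ∈ Z2, λ ∈ [0,1]} is contained in the zonotope with center 0.5·(c1+c2) and generator matrix [0.5·(c1−c2), 0.5·(G1+G2'), 0.5·(G1−G2'), G2'']. -/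
open scoped Pointwise

/-- Matrix exponential. -/
noncomputable def mexp {n : ℕ} (A : Matrix (Fin n) (Fin n) ℝ) : Matrix (Fin n) (Fin n) ℝ :=
  NormedSpace.exp A

/-- Matrix-vector multiplication on Euclidean space. -/
noncomputable def mvE {m n : ℕ} (M : Matrix (Fin m) (Fin n) ℝ)
    (x : EuclideanSpace ℝ (Fin n)) : EuclideanSpace ℝ (Fin m) :=
  Matrix.toEuclideanLin M x

/-- Image of a set under a matrix: M·S = {M·s : s ∈ S}. -/
noncomputable def imgM {m n : ℕ} (M : Matrix (Fin m) (Fin n) ℝ)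
    (S : Set (EuclideanSpace ℝ (Fin n))) : Set (EuclideanSpace ℝ (Fin m)) :=
  mvE M '' S

/-- Zonotope with center `c` and generator matrix `G`. -/
noncomputable def zono {n p : ℕ} (c : EuclideanSpace ℝ (Fin n))
    (G : Matrix (Fin n) (Fin p) ℝ) : Set (EuclideanSpace ℝ (Fin n)) :=
  {x | ∃ α : EuclideanSpace ℝ (Fin p), (∀ i, α i ∈ Set.Icc (-1 : ℝ) 1) ∧ x = c + mvE G α}

/-- Linear combination of two sets. -/
def linComb {n : ℕ} (S1 S2 : Set (EuclideanSpace ℝ (Fin n))) :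
    Set (EuclideanSpace ℝ (Fin n)) :=
  {x | ∃ s1 ∈ S1, ∃ s2 ∈ S2, ∃ lam ∈ Set.Icc (0 : ℝ) 1, x = lam • s1 + (1 - lam) • s2}

/-- Tightest axis-aligned interval enclosure of a set. -/
noncomputable def box {n : ℕ} (S : Set (EuclideanSpace ℝ (Fin n))) :
    Set (EuclideanSpace ℝ (Fin n)) :=
  {x | ∀ i, x i ∈ Set.Icc (sInf ((fun y => y i) '' S)) (sSup ((fun y => y i) '' S))}

/-- Radius of the smallest origin-centered enclosing hypersphere. -/
noncomputable def rad {n : ℕ} (S : Set (EuclideanSpace ℝ (Fin n))) : ℝ :=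
  sSup ((fun x => ‖x‖) '' S)

/-- err(S) = rad(box(S)). -/
noncomputable def err {n : ℕ} (S : Set (EuclideanSpace ℝ (Fin n))) : ℝ := rad (box S)

/-- Spectral norm (operator 2-norm) of a matrix. -/
noncomputable def specNorm {m n : ℕ} (M : Matrix (Fin m) (Fin n) ℝ) : ℝ :=
  ‖LinearMap.toContinuousLinearMap (Matrix.toEuclideanLin M)‖

/-- Particular solution set P_U(t). -/
noncomputable def PU {n : ℕ} (U0 : Set (EuclideanSpace ℝ (Fin n)))
    (A : Matrix (Fin n) (Fin n) ℝ) (t : ℝ) : Set (EuclideanSpace ℝ (Fin n)) :=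
  {x | ∃ u : ℝ → EuclideanSpace ℝ (Fin n), Measurable u ∧ (∀ θ ∈ Set.Icc 0 t, u θ ∈ U0) ∧
    x = ∫ θ in (0 : ℝ)..t, mvE (mexp ((t - θ) • A)) (u θ)}

/-- Entrywise integral ∫₀^t e^{A·σ} dσ of the matrix exponential. -/
noncomputable def intExp {n : ℕ} (A : Matrix (Fin n) (Fin n) ℝ) (t : ℝ) :
    Matrix (Fin n) (Fin n) ℝ :=
  Matrix.of fun i j => ∫ σ in (0 : ℝ)..t, mexp (σ • A) i j

/-- Entrywise absolute value of a matrix. -/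
def entAbs {m n : ℕ} (M : Matrix (Fin m) (Fin n) ℝ) : Matrix (Fin m) (Fin n) ℝ :=
  Matrix.of fun i j => |M i j|

/-- Exponential remainder matrix E(Δt,η). -/
noncomputable def Eexp {n : ℕ} (A : Matrix (Fin n) (Fin n) ℝ) (dt : ℝ) (η : ℕ) :
    Matrix (Fin n) (Fin n) ℝ :=
  mexp (dt • entAbs A) -
    ∑ i ∈ Finset.range (η + 1), ((Nat.factorial i : ℝ)⁻¹) • (dt • entAbs A) ^ i

/-- Ã_i = A^i·Δt^{i+1}/(i+1)!. -/
noncomputable def Atilde {n : ℕ} (A : Matrix (Fin n) (Fin n) ℝ) (dt : ℝ) (i : ℕ) :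
    Matrix (Fin n) (Fin n) ℝ :=
  (dt ^ (i + 1) / (Nat.factorial (i + 1) : ℝ)) • A ^ i

/-- D(Δt) = {Δt·M·u : |M| ≤ E(Δt,η) entrywise, u ∈ U₀}. -/
noncomputable def Dset {n : ℕ} (A : Matrix (Fin n) (Fin n) ℝ) (dt : ℝ) (η : ℕ)
    (U0 : Set (EuclideanSpace ℝ (Fin n))) : Set (EuclideanSpace ℝ (Fin n)) :=
  {x | ∃ M : Matrix (Fin n) (Fin n) ℝ, (∀ i j, |M i j| ≤ Eexp A dt η i j) ∧
    ∃ u ∈ U0, x = dt • mvE M u}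

/-- P̂(Δt) = Ã_0·U₀ ⊕ … ⊕ Ã_η·U₀ ⊕ D(Δt). -/
noncomputable def PhatSet {n : ℕ} (A : Matrix (Fin n) (Fin n) ℝ) (dt : ℝ) (η : ℕ)
    (U0 : Set (EuclideanSpace ℝ (Fin n))) : Set (EuclideanSpace ℝ (Fin n)) :=
  (∑ i ∈ Finset.range (η + 1), imgM (Atilde A dt i) U0) + Dset A dt η U0

/-- One-step accumulating error bound ε̂(Δt). -/
noncomputable def ehatStep {n : ℕ} (A : Matrix (Fin n) (Fin n) ℝ) (t : ℝ) (η : ℕ)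
    (U0 : Set (EuclideanSpace ℝ (Fin n))) (dt : ℝ) : ℝ :=
  err (imgM (mexp (t • A)) (imgM (∑ i ∈ Finset.Icc 1 η, Atilde A dt i) U0 + Dset A dt η U0)) +
  err (imgM (mexp (t • A)) ((∑ i ∈ Finset.Icc 1 η, imgM (Atilde A dt i) U0) + Dset A dt η U0))

/-- Scalar interval I_i(Δt). -/
noncomputable def Iint (i : ℕ) (dt : ℝ) : Set ℝ :=
  Set.Icc (((i : ℝ) ^ (-(i : ℝ) / ((i : ℝ) - 1)) - (i : ℝ) ^ (-(1 : ℝ) / ((i : ℝ) - 1))) * dt ^ i) 0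

/-- Interval matrix F_x(Δt). -/
noncomputable def Fx {n : ℕ} (A : Matrix (Fin n) (Fin n) ℝ) (η : ℕ) (dt : ℝ) :
    Set (Matrix (Fin n) (Fin n) ℝ) :=
  {M | ∃ τ : ℕ → ℝ, (∀ i ∈ Finset.Icc 2 η, τ i ∈ Iint i dt) ∧
    ∃ R : Matrix (Fin n) (Fin n) ℝ, (∀ i j, |R i j| ≤ Eexp A dt η i j) ∧
    M = (∑ i ∈ Finset.Icc 2 η, (τ i / (Nat.factorial i : ℝ)) • A ^ i) + R}

/-- Interval matrix F_u(Δt). -/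
noncomputable def Fu {n : ℕ} (A : Matrix (Fin n) (Fin n) ℝ) (η : ℕ) (dt : ℝ) :
    Set (Matrix (Fin n) (Fin n) ℝ) :=
  {N | ∃ τ : ℕ → ℝ, (∀ i ∈ Finset.Icc 2 (η + 1), τ i ∈ Iint i dt) ∧
    ∃ R : Matrix (Fin n) (Fin n) ℝ, (∀ i j, |R i j| ≤ Eexp A dt η i j) ∧
    N = (∑ i ∈ Finset.Icc 2 (η + 1), (τ i / (Nat.factorial i : ℝ)) • A ^ (i - 1)) + dt • R}

/-- Curvature enclosure set C(Δt). -/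
noncomputable def Cset {n p : ℕ} (A : Matrix (Fin n) (Fin n) ℝ) (η : ℕ) (dt : ℝ)
    (ch : EuclideanSpace ℝ (Fin n)) (Gh : Matrix (Fin n) (Fin p) ℝ)
    (utld : EuclideanSpace ℝ (Fin n)) : Set (EuclideanSpace ℝ (Fin n)) :=
  {y | ∃ M ∈ Fx A η dt, ∃ N ∈ Fu A η dt, ∃ x ∈ zono ch Gh, y = mvE M x + mvE N utld}

/-- ε_hom(Δt). -/
noncomputable def ehom {n p : ℕ} (A : Matrix (Fin n) (Fin n) ℝ) (η : ℕ)
    (ch : EuclideanSpace ℝ (Fin n)) (Gh : Matrix (Fin n) (Fin p) ℝ)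
    (utld : EuclideanSpace ℝ (Fin n)) (dt : ℝ) : ℝ :=
  2 * err (Cset A η dt ch Gh utld) + Real.sqrt p * specNorm ((mexp (dt • A) - 1) * Gh)

/-- ε_U(Δt) = err(e^{A·t}·P̂(Δt)). -/
noncomputable def errPhat {n : ℕ} (A : Matrix (Fin n) (Fin n) ℝ) (t : ℝ) (η : ℕ)
    (U0 : Set (EuclideanSpace ℝ (Fin n))) (dt : ℝ) : ℝ :=
  err (imgM (mexp (t • A)) (PhatSet A dt η U0))
lemma mvE_apply {m n : ℕ} (M : Matrix (Fin m) (Fin n) ℝ) (x : EuclideanSpace ℝ (Fin n)) (i : Fin m) :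
    mvE M x i = ∑ j, M i j * x j := by
  simp [mvE, Matrix.toEuclideanLin_apply, Matrix.mulVec, dotProduct]

lemma sum_split {p1 p2 : ℕ} (h : p1 ≤ p2) (f : Fin p2 → ℝ) :
    ∑ j, f j = (∑ j : Fin p1, f (Fin.castLE h j)) +
      ∑ j : Fin (p2 - p1), f (Fin.cast (Nat.sub_add_cancel h) (j.addNat p1)) := by
  have e : p1 + (p2 - p1) = p2 := Nat.add_sub_cancel' h
  rw [← Fin.sum_congr' f e, Fin.sum_univ_add]
  congr 1
  exact Finset.sum_congr rfl fun j _ => by congr 1; apply Fin.ext; simp [Nat.add_comm]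

/-- enclosure of the linear combination of two zonotopes. -/
theorem linComb_zono_subset {n p1 p2 : ℕ} (h : p1 ≤ p2)
    (c1 c2 : EuclideanSpace ℝ (Fin n))
    (G1 : Matrix (Fin n) (Fin p1) ℝ) (G2 : Matrix (Fin n) (Fin p2) ℝ) :
    linComb (zono c1 G1) (zono c2 G2) ⊆
      {x | ∃ lam : ℝ, ∃ β γ : EuclideanSpace ℝ (Fin p1),
        ∃ δ : EuclideanSpace ℝ (Fin (p2 - p1)),
        lam ∈ Set.Icc (-1 : ℝ) 1 ∧ (∀ i, β i ∈ Set.Icc (-1 : ℝ) 1) ∧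
        (∀ i, γ i ∈ Set.Icc (-1 : ℝ) 1) ∧ (∀ i, δ i ∈ Set.Icc (-1 : ℝ) 1) ∧
        x = (0.5 : ℝ) • (c1 + c2) + lam • ((0.5 : ℝ) • (c1 - c2))
          + mvE ((0.5 : ℝ) • (G1 + Matrix.of fun i j => G2 i (Fin.castLE h j))) β
          + mvE ((0.5 : ℝ) • (G1 - Matrix.of fun i j => G2 i (Fin.castLE h j))) γ
          + mvE (Matrix.of fun i (j : Fin (p2 - p1)) =>
              G2 i (Fin.cast (Nat.sub_add_cancel h) (j.addNat p1))) δ} := by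
  rintro x ⟨s1, ⟨α1, hα1, rfl⟩, s2, ⟨α2, hα2, rfl⟩, lam, hlam, rfl⟩
  obtain ⟨hl0, hl1⟩ := hlam
  refine ⟨2 * lam - 1,
    (WithLp.toLp 2 (fun j => lam * α1 j + (1 - lam) * α2 (Fin.castLE h j)) : EuclideanSpace ℝ (Fin p1)),
    (WithLp.toLp 2 (fun j => lam * α1 j - (1 - lam) * α2 (Fin.castLE h j)) : EuclideanSpace ℝ (Fin p1)),
    (WithLp.toLp 2 (fun (j : Fin (p2 - p1)) => (1 - lam) * α2 (Fin.cast (Nat.sub_add_cancel h) (j.addNat p1))) :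
      EuclideanSpace ℝ (Fin (p2 - p1))),
    ⟨by linarith, by linarith⟩,
    fun j => ⟨show (-1 : ℝ) ≤ lam * α1 j + (1 - lam) * α2 (Fin.castLE h j) by
                nlinarith [(hα1 j).1, (hα1 j).2, (hα2 (Fin.castLE h j)).1, (hα2 (Fin.castLE h j)).2],
              show lam * α1 j + (1 - lam) * α2 (Fin.castLE h j) ≤ 1 by
                nlinarith [(hα1 j).1, (hα1 j).2, (hα2 (Fin.castLE h j)).1, (hα2 (Fin.castLE h j)).2]⟩,
    fun j => ⟨show (-1 : ℝ) ≤ lam * α1 j - (1 - lam) * α2 (Fin.castLE h j) by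
                nlinarith [(hα1 j).1, (hα1 j).2, (hα2 (Fin.castLE h j)).1, (hα2 (Fin.castLE h j)).2],
              show lam * α1 j - (1 - lam) * α2 (Fin.castLE h j) ≤ 1 by
                nlinarith [(hα1 j).1, (hα1 j).2, (hα2 (Fin.castLE h j)).1, (hα2 (Fin.castLE h j)).2]⟩,
    fun j => ⟨show (-1 : ℝ) ≤ (1 - lam) * α2 (Fin.cast (Nat.sub_add_cancel h) (j.addNat p1)) by
                nlinarith [(hα2 (Fin.cast (Nat.sub_add_cancel h) (j.addNat p1))).1,
                  (hα2 (Fin.cast (Nat.sub_add_cancel h) (j.addNat p1))).2],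
              show (1 - lam) * α2 (Fin.cast (Nat.sub_add_cancel h) (j.addNat p1)) ≤ 1 by
                nlinarith [(hα2 (Fin.cast (Nat.sub_add_cancel h) (j.addNat p1))).1,
                  (hα2 (Fin.cast (Nat.sub_add_cancel h) (j.addNat p1))).2]⟩, ?_⟩
  ext i
  simp only [PiLp.add_apply, PiLp.smul_apply, PiLp.sub_apply, smul_eq_mul, mvE_apply,
    Matrix.smul_apply, Matrix.add_apply, Matrix.sub_apply, Matrix.of_apply]
  rw [sum_split h (fun j => G2 i j * α2 j)]
  have h1 : lam * (∑ j, G1 i j * α1 j)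
      + (1 - lam) * (∑ j : Fin p1, G2 i (Fin.castLE h j) * α2 (Fin.castLE h j))
      = (∑ j, (0.5 : ℝ) * (G1 i j + G2 i (Fin.castLE h j))
            * (lam * α1 j + (1 - lam) * α2 (Fin.castLE h j)))
        + ∑ j, (0.5 : ℝ) * (G1 i j - G2 i (Fin.castLE h j))
            * (lam * α1 j - (1 - lam) * α2 (Fin.castLE h j)) := by
    rw [Finset.mul_sum, Finset.mul_sum, ← Finset.sum_add_distrib, ← Finset.sum_add_distrib]
    exact Finset.sum_congr rfl fun j _ => by ring
  have h2 : (1 - lam) * (∑ j : Fin (p2 - p1),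
        G2 i (Fin.cast (Nat.sub_add_cancel h) (j.addNat p1))
          * α2 (Fin.cast (Nat.sub_add_cancel h) (j.addNat p1)))
      = ∑ j : Fin (p2 - p1), G2 i (Fin.cast (Nat.sub_add_cancel h) (j.addNat p1))
          * ((1 - lam) * α2 (Fin.cast (Nat.sub_add_cancel h) (j.addNat p1))) := by
    rw [Finset.mul_sum]
    exact Finset.sum_congr rfl fun j _ => by ring
  linear_combination h1 + h2
end

section
/- Let H = {c_h + G_h·α : α ∈ [-1,1]^p} be a zonotope in ℝ^n, let A ∈ ℝ^{n×n}, Δt > 0, c_p ∈ ℝ^n, and set Φ = e^{A·Δt} (matrix exponential). Let S = linComb(H, Φ·H + c_p) be the exact linear combination of H and the set {Φ·x + c_p : x ∈ H}, and let Ŝ be the zonotope with center 0.5·((I+Φ)·c_h + c_p) and generator matrix [0.5·((I−Φ)·c_h − c_p), 0.5·(I+Φ)·G_h, 0.5·(I−Φ)·G_h]. Then S ⊆ Ŝ and d_H(S, Ŝ) ≤ √p · ‖(Φ − I)·G_h‖₂, where ‖·‖₂ denotes the spectral (operator 2-) norm of a matrix. -/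
open scoped Pointwise

lemma mvE_add {m n : ℕ} (M : Matrix (Fin m) (Fin n) ℝ) (x y : EuclideanSpace ℝ (Fin n)) :
    mvE M (x + y) = mvE M x + mvE M y := map_add _ _ _
lemma mvE_smul {m n : ℕ} (M : Matrix (Fin m) (Fin n) ℝ) (c : ℝ) (x : EuclideanSpace ℝ (Fin n)) :
    mvE M (c • x) = c • mvE M x := map_smul _ _ _
lemma mvE_sub {m n : ℕ} (M : Matrix (Fin m) (Fin n) ℝ) (x y : EuclideanSpace ℝ (Fin n)) :
    mvE M (x - y) = mvE M x - mvE M y := map_sub _ _ _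
lemma mvE_add_left {m n : ℕ} (M N : Matrix (Fin m) (Fin n) ℝ) (x : EuclideanSpace ℝ (Fin n)) :
    mvE (M + N) x = mvE M x + mvE N x := by simp [mvE, map_add]
lemma mvE_sub_left {m n : ℕ} (M N : Matrix (Fin m) (Fin n) ℝ) (x : EuclideanSpace ℝ (Fin n)) :
    mvE (M - N) x = mvE M x - mvE N x := by simp [mvE, map_sub]
lemma mvE_smul_left {m n : ℕ} (c : ℝ) (M : Matrix (Fin m) (Fin n) ℝ)
    (x : EuclideanSpace ℝ (Fin n)) : mvE (c • M) x = c • mvE M x := by simp [mvE, map_smul]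
lemma mvE_one {n : ℕ} (x : EuclideanSpace ℝ (Fin n)) : mvE 1 x = x := by
  simp [mvE, Matrix.toEuclideanLin_apply]
lemma mvE_mul {m n k : ℕ} (M : Matrix (Fin m) (Fin n) ℝ) (N : Matrix (Fin n) (Fin k) ℝ)
    (x : EuclideanSpace ℝ (Fin k)) : mvE (M * N) x = mvE M (mvE N x) := by
  simp [mvE, Matrix.toEuclideanLin_apply, Matrix.mulVec_mulVec]
lemma mvE_norm_le {m n : ℕ} (M : Matrix (Fin m) (Fin n) ℝ) (x : EuclideanSpace ℝ (Fin n)) :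
    ‖mvE M x‖ ≤ specNorm M * ‖x‖ := by
  have := (LinearMap.toContinuousLinearMap (Matrix.toEuclideanLin M)).le_opNorm x
  simpa [mvE, specNorm] using this
lemma specNorm_neg' {m n : ℕ} (M : Matrix (Fin m) (Fin n) ℝ) :
    specNorm (-M) = specNorm M := by simp [specNorm, map_neg]
lemma norm_le_sqrt_card {p : ℕ} (α : EuclideanSpace ℝ (Fin p))
    (h : ∀ i, α i ∈ Set.Icc (-1 : ℝ) 1) : ‖α‖ ≤ Real.sqrt p := by
  rw [EuclideanSpace.norm_eq]
  apply Real.sqrt_le_sqrt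
  calc ∑ i, ‖α i‖ ^ 2 ≤ ∑ _i : Fin p, (1 : ℝ) := by
        apply Finset.sum_le_sum
        intro i _
        have h1 := (h i).1; have h2 := (h i).2
        have : ‖α i‖ ≤ 1 := by rw [Real.norm_eq_abs, abs_le]; exact ⟨h1, h2⟩
        nlinarith [norm_nonneg (α i)]
    _ = p := by simp


/-- error of the zonotope enclosure of the linear combination
`S = linComb(H, Φ·H + c_p)`. -/
theorem linComb_zono_enclosure_error {n p : ℕ} (A : Matrix (Fin n) (Fin n) ℝ)
    (dt : ℝ) (hdt : 0 < dt) (ch : EuclideanSpace ℝ (Fin n))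
    (Gh : Matrix (Fin n) (Fin p) ℝ) (cp : EuclideanSpace ℝ (Fin n)) :
    linComb (zono ch Gh) ((fun x => mvE (mexp (dt • A)) x + cp) '' zono ch Gh) ⊆
      {x | ∃ lam : ℝ, ∃ β γ : EuclideanSpace ℝ (Fin p),
        lam ∈ Set.Icc (-1 : ℝ) 1 ∧ (∀ i, β i ∈ Set.Icc (-1 : ℝ) 1) ∧
        (∀ i, γ i ∈ Set.Icc (-1 : ℝ) 1) ∧
        x = (0.5 : ℝ) • (mvE (1 + mexp (dt • A)) ch + cp)
          + lam • ((0.5 : ℝ) • (mvE (1 - mexp (dt • A)) ch - cp))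
          + mvE ((0.5 : ℝ) • ((1 + mexp (dt • A)) * Gh)) β
          + mvE ((0.5 : ℝ) • ((1 - mexp (dt • A)) * Gh)) γ} ∧
    Metric.hausdorffDist
      (linComb (zono ch Gh) ((fun x => mvE (mexp (dt • A)) x + cp) '' zono ch Gh))
      {x | ∃ lam : ℝ, ∃ β γ : EuclideanSpace ℝ (Fin p),
        lam ∈ Set.Icc (-1 : ℝ) 1 ∧ (∀ i, β i ∈ Set.Icc (-1 : ℝ) 1) ∧
        (∀ i, γ i ∈ Set.Icc (-1 : ℝ) 1) ∧
        x = (0.5 : ℝ) • (mvE (1 + mexp (dt • A)) ch + cp)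
          + lam • ((0.5 : ℝ) • (mvE (1 - mexp (dt • A)) ch - cp))
          + mvE ((0.5 : ℝ) • ((1 + mexp (dt • A)) * Gh)) β
          + mvE ((0.5 : ℝ) • ((1 - mexp (dt • A)) * Gh)) γ}
      ≤ Real.sqrt p * specNorm ((mexp (dt • A) - 1) * Gh) := by
  
  have hsub : linComb (zono ch Gh) ((fun x => mvE (mexp (dt • A)) x + cp) '' zono ch Gh) ⊆
      {x | ∃ lam : ℝ, ∃ β γ : EuclideanSpace ℝ (Fin p),
        lam ∈ Set.Icc (-1 : ℝ) 1 ∧ (∀ i, β i ∈ Set.Icc (-1 : ℝ) 1) ∧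
        (∀ i, γ i ∈ Set.Icc (-1 : ℝ) 1) ∧
        x = (0.5 : ℝ) • (mvE (1 + mexp (dt • A)) ch + cp)
          + lam • ((0.5 : ℝ) • (mvE (1 - mexp (dt • A)) ch - cp))
          + mvE ((0.5 : ℝ) • ((1 + mexp (dt • A)) * Gh)) β
          + mvE ((0.5 : ℝ) • ((1 - mexp (dt • A)) * Gh)) γ} := by
    rintro x ⟨s1, ⟨α, hα, rfl⟩, s2, ⟨y, ⟨α', hα', rfl⟩, rfl⟩, lam0, hlam0, rfl⟩
    refine ⟨2 * lam0 - 1, lam0 • α + (1 - lam0) • α', lam0 • α - (1 - lam0) • α',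
      ⟨by have := hlam0.1; have := hlam0.2; constructor <;> linarith,
       fun i => by
        have h1 := (hα i).1; have h2 := (hα i).2
        have h1' := (hα' i).1; have h2' := (hα' i).2
        have l1 := hlam0.1; have l2 := hlam0.2
        simp only [PiLp.add_apply, PiLp.smul_apply, smul_eq_mul]
        constructor <;> nlinarith,
       fun i => by
        have h1 := (hα i).1; have h2 := (hα i).2
        have h1' := (hα' i).1; have h2' := (hα' i).2
        have l1 := hlam0.1; have l2 := hlam0.2
        simp only [PiLp.sub_apply, PiLp.smul_apply, smul_eq_mul]
        constructor <;> nlinarith, ?_⟩⟩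
    simp only [mvE_smul_left, mvE_mul, mvE_add_left, mvE_sub_left, mvE_one,
      mvE_add, mvE_sub, mvE_smul]
    module
  refine ⟨hsub, ?_⟩
  have hr0 : 0 ≤ Real.sqrt p * specNorm ((mexp (dt • A) - 1) * Gh) :=
    mul_nonneg (Real.sqrt_nonneg _) (norm_nonneg _)
  apply Metric.hausdorffDist_le_of_mem_dist hr0
  · intro x hx
    refine ⟨x, hsub hx, ?_⟩
    simpa [dist_self] using hr0
  · rintro x ⟨lam, β, γ, hlam, hβ, hγ, rfl⟩
    set Φ := mexp (dt • A) with hΦ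
    set lam0 : ℝ := (1 + lam) / 2 with hlam0def
    have hl1 := hlam.1; have hl2 := hlam.2
    refine ⟨lam0 • (ch + mvE Gh β) + (1 - lam0) • (mvE Φ (ch + mvE Gh β) + cp),
      ⟨ch + mvE Gh β, ⟨β, hβ, rfl⟩, mvE Φ (ch + mvE Gh β) + cp,
        ⟨ch + mvE Gh β, ⟨β, hβ, rfl⟩, rfl⟩, lam0,
        ⟨by simp only [hlam0def]; constructor <;> linarith, rfl⟩⟩, ?_⟩
    rw [dist_eq_norm]
    have key : ((0.5 : ℝ) • (mvE (1 + Φ) ch + cp)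
          + lam • ((0.5 : ℝ) • (mvE (1 - Φ) ch - cp))
          + mvE ((0.5 : ℝ) • ((1 + Φ) * Gh)) β
          + mvE ((0.5 : ℝ) • ((1 - Φ) * Gh)) γ)
        - (lam0 • (ch + mvE Gh β) + (1 - lam0) • (mvE Φ (ch + mvE Gh β) + cp))
        = (0.5 : ℝ) • mvE ((1 - Φ) * Gh) (γ - lam • β) := by
      simp only [hlam0def, mvE_smul_left, mvE_mul, mvE_add_left, mvE_sub_left, mvE_one,
        mvE_add, mvE_sub, mvE_smul]
      module
    rw [key, norm_smul]
    have hb1 : ‖mvE ((1 - Φ) * Gh) (γ - lam • β)‖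
        ≤ specNorm ((1 - Φ) * Gh) * ‖γ - lam • β‖ := mvE_norm_le _ _
    have hs : specNorm ((1 - Φ) * Gh) = specNorm ((Φ - 1) * Gh) := by
      rw [← specNorm_neg' ((Φ - 1) * Gh), ← Matrix.neg_mul, neg_sub]
    have hv : ‖γ - lam • β‖ ≤ 2 * Real.sqrt p := by
      calc ‖γ - lam • β‖ ≤ ‖γ‖ + ‖lam • β‖ := norm_sub_le _ _
        _ = ‖γ‖ + |lam| * ‖β‖ := by rw [norm_smul, Real.norm_eq_abs]
        _ ≤ Real.sqrt p + 1 * Real.sqrt p := by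
            have h1 := norm_le_sqrt_card γ hγ
            have h2 := norm_le_sqrt_card β hβ
            have h3 : |lam| ≤ 1 := abs_le.mpr ⟨hl1, hl2⟩
            have h4 : (0:ℝ) ≤ |lam| := abs_nonneg _
            have h5 : (0:ℝ) ≤ ‖β‖ := norm_nonneg _
            nlinarith
        _ = 2 * Real.sqrt p := by ring
    have hsn : (0:ℝ) ≤ specNorm ((Φ - 1) * Gh) := norm_nonneg _
    calc ‖(0.5:ℝ)‖ * ‖mvE ((1 - Φ) * Gh) (γ - lam • β)‖
        ≤ (0.5:ℝ) * (specNorm ((Φ - 1) * Gh) * (2 * Real.sqrt p)) := by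
          rw [hs] at hb1
          have : ‖(0.5:ℝ)‖ = (0.5:ℝ) := by norm_num [Real.norm_eq_abs]
          rw [this]
          have := mul_le_mul hb1 (le_refl (1:ℝ)) zero_le_one (by positivity)
          have hmul : specNorm ((Φ - 1) * Gh) * ‖γ - lam • β‖
              ≤ specNorm ((Φ - 1) * Gh) * (2 * Real.sqrt p) :=
            mul_le_mul_of_nonneg_left hv hsn
          nlinarith [norm_nonneg (mvE ((1 - Φ) * Gh) (γ - lam • β))]
      _ = Real.sqrt p * specNorm ((Φ - 1) * Gh) := by ring
end

section
/- Let A ∈ ℝ^{n×n}, Δt > 0, and let η ≥ 0 be an integer. Then the matrix ∫₀^{Δt} e^{A·σ} dσ − Σ_{i=0}^{η} A^i·Δt^{i+1}/(i+1)! has entrywise absolute value bounded by Δt·E(Δt,η), i.e., |∫₀^{Δt} e^{A·σ} dσ − Σ_{i=0}^{η} A^i·Δt^{i+1}/(i+1)!| ≤ Δt·E(Δt,η) entrywise. -/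
open scoped Pointwise

section AuxIntExp

variable {n : ℕ}

lemma entAbs_pow_entry_bound (M : Matrix (Fin n) (Fin n) ℝ) :
    ∀ (k : ℕ) (i j : Fin n), |(M ^ k) i j| ≤ (entAbs M ^ k) i j := by
  intro k
  induction k with
  | zero =>
    intro i j
    simp only [pow_zero, Matrix.one_apply]
    split <;> simp
  | succ k ih =>
    intro i j
    rw [pow_succ, pow_succ, Matrix.mul_apply, Matrix.mul_apply]
    calc |∑ l, (M ^ k) i l * M l j| ≤ ∑ l, |(M ^ k) i l * M l j| :=
          Finset.abs_sum_le_sum_abs _ _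
      _ ≤ ∑ l, (entAbs M ^ k) i l * entAbs M l j := by
          apply Finset.sum_le_sum
          intro l _
          rw [abs_mul]
          have h1 := ih i l
          have h2 : |M l j| = entAbs M l j := rfl
          exact mul_le_mul h1 (le_of_eq h2) (abs_nonneg _) ((abs_nonneg _).trans h1)

lemma entAbs_pow_entry_nonneg (M : Matrix (Fin n) (Fin n) ℝ) (k : ℕ) (i j : Fin n) :
    0 ≤ (entAbs M ^ k) i j :=
  (abs_nonneg _).trans (entAbs_pow_entry_bound M k i j)

lemma entAbs_pow_entry_le_C (M : Matrix (Fin n) (Fin n) ℝ) (k : ℕ) (i j : Fin n) :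
    (entAbs M ^ k) i j ≤ (∑ a, ∑ b, |M a b|) ^ k := by
  have hC0 : (0 : ℝ) ≤ ∑ a, ∑ b, |M a b| :=
    Finset.sum_nonneg fun a _ => Finset.sum_nonneg fun b _ => abs_nonneg _
  induction k generalizing j with
  | zero =>
    simp only [pow_zero, Matrix.one_apply]
    split <;> simp
  | succ k ih =>
    rw [pow_succ, pow_succ, Matrix.mul_apply]
    calc ∑ l, (entAbs M ^ k) i l * entAbs M l j
        ≤ ∑ l, (∑ a, ∑ b, |M a b|) ^ k * entAbs M l j := by
          apply Finset.sum_le_sum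
          intro l _
          have : (0:ℝ) ≤ entAbs M l j := abs_nonneg (M l j)
          exact mul_le_mul_of_nonneg_right (ih l) this
      _ = (∑ a, ∑ b, |M a b|) ^ k * ∑ l, entAbs M l j := by
          rw [Finset.mul_sum]
      _ ≤ (∑ a, ∑ b, |M a b|) ^ k * ∑ a, ∑ b, |M a b| := by
          apply mul_le_mul_of_nonneg_left _ (pow_nonneg hC0 k)
          apply Finset.sum_le_sum
          intro l _
          have : |M l j| ≤ ∑ b, |M l b| :=
            Finset.single_le_sum (f := fun b => |M l b|)
              (fun b _ => abs_nonneg _) (Finset.mem_univ j)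
          exact this.trans (Finset.sum_le_sum fun b _ => le_refl _)

lemma abs_pow_entry_le_C (M : Matrix (Fin n) (Fin n) ℝ) (k : ℕ) (i j : Fin n) :
    |(M ^ k) i j| ≤ (∑ a, ∑ b, |M a b|) ^ k :=
  (entAbs_pow_entry_bound M k i j).trans (entAbs_pow_entry_le_C M k i j)

lemma summable_entry_series (M : Matrix (Fin n) (Fin n) ℝ) (t : ℝ) (i j : Fin n) :
    Summable fun k : ℕ => (Nat.factorial k : ℝ)⁻¹ * t ^ k * (M ^ k) i j := by
  set C : ℝ := ∑ a, ∑ b, |M a b| with hCdef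
  have hC0 : (0 : ℝ) ≤ C :=
    Finset.sum_nonneg fun a _ => Finset.sum_nonneg fun b _ => abs_nonneg _
  apply Summable.of_norm
  apply Summable.of_nonneg_of_le (fun k => norm_nonneg _) (fun k => ?_)
    (Real.summable_pow_div_factorial (|t| * C))
  calc ‖(Nat.factorial k : ℝ)⁻¹ * t ^ k * (M ^ k) i j‖
      = (Nat.factorial k : ℝ)⁻¹ * |t| ^ k * |(M ^ k) i j| := by
        rw [Real.norm_eq_abs, abs_mul, abs_mul, abs_inv, abs_pow, Nat.abs_cast]
    _ ≤ (Nat.factorial k : ℝ)⁻¹ * |t| ^ k * C ^ k := by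
        apply mul_le_mul_of_nonneg_left (abs_pow_entry_le_C M k i j)
        positivity
    _ = (|t| * C) ^ k / (Nat.factorial k : ℝ) := by
        rw [mul_pow]; ring

lemma mexp_entry (M : Matrix (Fin n) (Fin n) ℝ) (t : ℝ) (i j : Fin n) :
    mexp (t • M) i j = ∑' k : ℕ, (Nat.factorial k : ℝ)⁻¹ * t ^ k * (M ^ k) i j := by
  have hF : HasSum (fun k : ℕ => (Nat.factorial k : ℝ)⁻¹ • (t • M) ^ k)
      (Matrix.of fun a b => ∑' k : ℕ, (Nat.factorial k : ℝ)⁻¹ * t ^ k * (M ^ k) a b) := by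
    apply Pi.hasSum.mpr
    intro a
    apply Pi.hasSum.mpr
    intro b
    have h := (summable_entry_series M t a b).hasSum
    convert h using 2 with k
    show ((Nat.factorial k : ℝ)⁻¹ • (t • M) ^ k) a b = _
    rw [smul_pow]
    simp only [Matrix.smul_apply, smul_eq_mul]
    ring
    rfl
  have h2 : mexp (t • M) =
      Matrix.of fun a b => ∑' k : ℕ, (Nat.factorial k : ℝ)⁻¹ * t ^ k * (M ^ k) a b := by
    rw [mexp, NormedSpace.exp_eq_tsum (𝕂 := ℝ)]
    exact hF.tsum_eq
  rw [h2]
  rfl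

lemma Eexp_entry (A : Matrix (Fin n) (Fin n) ℝ) (dt : ℝ) (η : ℕ) (i j : Fin n) :
    Eexp A dt η i j = ∑' k : ℕ, (Nat.factorial (k + (η + 1)) : ℝ)⁻¹ * dt ^ (k + (η + 1)) *
      (entAbs A ^ (k + (η + 1))) i j := by
  have hsum := summable_entry_series (entAbs A) dt i j
  have hkey := Summable.sum_add_tsum_nat_add (f := fun k : ℕ =>
    (Nat.factorial k : ℝ)⁻¹ * dt ^ k * (entAbs A ^ k) i j) (η + 1) hsum
  have hE : Eexp A dt η i j = mexp (dt • entAbs A) i j -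
      ∑ k ∈ Finset.range (η + 1), (Nat.factorial k : ℝ)⁻¹ * dt ^ k * (entAbs A ^ k) i j := by
    rw [Eexp]
    rw [Matrix.sub_apply]
    congr 1
    rw [Matrix.sum_apply]
    apply Finset.sum_congr rfl
    intro k _
    show ((Nat.factorial k : ℝ)⁻¹ • (dt • entAbs A) ^ k) i j = _
    rw [smul_pow]
    simp only [Matrix.smul_apply, smul_eq_mul]
    ring
  rw [hE, mexp_entry, ← hkey]
  ring

lemma remainder_pointwise_bound (A : Matrix (Fin n) (Fin n) ℝ) (dt : ℝ) (η : ℕ)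
    (σ : ℝ) (hσ : σ ∈ Set.Icc (0 : ℝ) dt) (i j : Fin n) :
    |mexp (σ • A) i j -
      ∑ k ∈ Finset.range (η + 1), (Nat.factorial k : ℝ)⁻¹ * σ ^ k * (A ^ k) i j| ≤
      Eexp A dt η i j := by
  obtain ⟨hσ0, hσdt⟩ := hσ
  have hdt0 : (0:ℝ) ≤ dt := hσ0.trans hσdt
  set a : ℕ → ℝ := fun k => (Nat.factorial k : ℝ)⁻¹ * σ ^ k * (A ^ k) i j with ha
  have hsa : Summable a := summable_entry_series A σ i j
  have hkey := Summable.sum_add_tsum_nat_add (f := a) (η + 1) hsa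
  have hdiff : mexp (σ • A) i j - ∑ k ∈ Finset.range (η + 1), a k =
      ∑' k : ℕ, a (k + (η + 1)) := by
    rw [mexp_entry, ← hkey]; ring
  rw [hdiff, Eexp_entry]
  have hbound : ∀ k : ℕ, |a (k + (η + 1))| ≤
      (Nat.factorial (k + (η + 1)) : ℝ)⁻¹ * dt ^ (k + (η + 1)) *
        (entAbs A ^ (k + (η + 1))) i j := by
    intro k
    rw [ha]
    simp only [abs_mul, abs_inv, abs_pow, Nat.abs_cast]
    have h1 : |σ| ^ (k + (η + 1)) ≤ dt ^ (k + (η + 1)) := by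
      apply pow_le_pow_left₀ (abs_nonneg σ)
      rw [abs_of_nonneg hσ0]; exact hσdt
    have h2 := entAbs_pow_entry_bound A (k + (η + 1)) i j
    have h3 : (0:ℝ) ≤ (Nat.factorial (k + (η + 1)) : ℝ)⁻¹ := by positivity
    exact mul_le_mul (mul_le_mul_of_nonneg_left h1 h3) h2 (abs_nonneg _)
      (mul_nonneg h3 (pow_nonneg hdt0 _))
  have hsa' : Summable fun k : ℕ => a (k + (η + 1)) :=
    (summable_nat_add_iff (f := a) (η + 1)).mpr hsa
  have hsabs : Summable fun k : ℕ => |a (k + (η + 1))| := hsa'.abs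
  have hsb : Summable fun k : ℕ => (Nat.factorial (k + (η + 1)) : ℝ)⁻¹ * dt ^ (k + (η + 1)) *
      (entAbs A ^ (k + (η + 1))) i j :=
    (summable_nat_add_iff (f := fun k : ℕ => (Nat.factorial k : ℝ)⁻¹ * dt ^ k *
      (entAbs A ^ k) i j) (η + 1)).mpr (summable_entry_series (entAbs A) dt i j)
  have habs : |∑' k : ℕ, a (k + (η + 1))| ≤ ∑' k : ℕ, |a (k + (η + 1))| := by
    have h2 : Summable fun k : ℕ => ‖a (k + (η + 1))‖ := by
      simpa only [Real.norm_eq_abs] using hsabs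
    have h3 := norm_tsum_le_tsum_norm (f := fun k : ℕ => a (k + (η + 1))) h2
    simpa only [Real.norm_eq_abs] using h3
  exact habs.trans (Summable.tsum_le_tsum hbound hsabs hsb)

lemma continuousOn_mexp_entry (A : Matrix (Fin n) (Fin n) ℝ) (dt : ℝ) (hdt : 0 < dt)
    (i j : Fin n) :
    ContinuousOn (fun σ : ℝ => mexp (σ • A) i j) (Set.Icc (0 : ℝ) dt) := by
  have heq : (fun σ : ℝ => mexp (σ • A) i j) =
      fun σ : ℝ => ∑' k : ℕ, (Nat.factorial k : ℝ)⁻¹ * σ ^ k * (A ^ k) i j :=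
    funext fun σ => mexp_entry A σ i j
  rw [heq]
  set C : ℝ := ∑ a, ∑ b, |A a b| with hCdef
  have hC0 : (0 : ℝ) ≤ C :=
    Finset.sum_nonneg fun a _ => Finset.sum_nonneg fun b _ => abs_nonneg _
  apply continuousOn_tsum (u := fun k : ℕ => (dt * C) ^ k / (Nat.factorial k : ℝ))
  · intro k
    exact (Continuous.continuousOn (by continuity))
  · exact Real.summable_pow_div_factorial _
  · intro k σ hσ
    obtain ⟨hσ0, hσdt⟩ := hσ
    calc ‖(Nat.factorial k : ℝ)⁻¹ * σ ^ k * (A ^ k) i j‖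
        = (Nat.factorial k : ℝ)⁻¹ * |σ| ^ k * |(A ^ k) i j| := by
          rw [Real.norm_eq_abs, abs_mul, abs_mul, abs_inv, abs_pow, Nat.abs_cast]
      _ ≤ (Nat.factorial k : ℝ)⁻¹ * dt ^ k * C ^ k := by
          apply mul_le_mul
          · apply mul_le_mul_of_nonneg_left _ (by positivity)
            apply pow_le_pow_left₀ (abs_nonneg σ)
            rw [abs_of_nonneg hσ0]; exact hσdt
          · exact abs_pow_entry_le_C A k i j
          · exact abs_nonneg _
          · positivity
      _ = (dt * C) ^ k / (Nat.factorial k : ℝ) := by rw [mul_pow]; ring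

end AuxIntExp

/-- entrywise remainder bound for the integrated matrix exponential. -/
theorem intExp_taylor_remainder_le {n : ℕ} (A : Matrix (Fin n) (Fin n) ℝ)
    (dt : ℝ) (hdt : 0 < dt) (η : ℕ) :
    ∀ i j, |(intExp A dt -
        ∑ k ∈ Finset.range (η + 1),
          (dt ^ (k + 1) / (Nat.factorial (k + 1) : ℝ)) • A ^ k) i j| ≤
      dt * Eexp A dt η i j := by
  intro i j
  have hg_int : IntervalIntegrable (fun σ : ℝ => mexp (σ • A) i j)
      MeasureTheory.volume 0 dt := by
    apply ContinuousOn.intervalIntegrable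
    rw [Set.uIcc_of_le hdt.le]
    exact continuousOn_mexp_entry A dt hdt i j
  have hP_cont : Continuous (fun σ : ℝ =>
      ∑ k ∈ Finset.range (η + 1), (Nat.factorial k : ℝ)⁻¹ * σ ^ k * (A ^ k) i j) := by
    apply continuous_finset_sum
    intro k _
    continuity
  have hP_int : IntervalIntegrable (fun σ : ℝ =>
      ∑ k ∈ Finset.range (η + 1), (Nat.factorial k : ℝ)⁻¹ * σ ^ k * (A ^ k) i j)
      MeasureTheory.volume 0 dt := hP_cont.intervalIntegrable 0 dt
  have hpoly : ∀ k : ℕ, (∫ σ in (0:ℝ)..dt, (Nat.factorial k : ℝ)⁻¹ * σ ^ k * (A ^ k) i j) =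
      dt ^ (k + 1) / (Nat.factorial (k + 1) : ℝ) * (A ^ k) i j := by
    intro k
    have heq : (fun σ : ℝ => (Nat.factorial k : ℝ)⁻¹ * σ ^ k * (A ^ k) i j) =
        fun σ : ℝ => ((Nat.factorial k : ℝ)⁻¹ * (A ^ k) i j) * σ ^ k := by
      funext σ; ring
    rw [heq, intervalIntegral.integral_const_mul, integral_pow]
    have hfac : (Nat.factorial (k + 1) : ℝ) = (k + 1) * (Nat.factorial k : ℝ) := by
      rw [Nat.factorial_succ]; push_cast; ring
    have h1 : (Nat.factorial k : ℝ) ≠ 0 := Nat.cast_ne_zero.mpr (Nat.factorial_ne_zero k)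
    have h2 : ((k : ℝ) + 1) ≠ 0 := by positivity
    rw [hfac]
    field_simp
    ring
  have hentry : (intExp A dt -
      ∑ k ∈ Finset.range (η + 1),
        (dt ^ (k + 1) / (Nat.factorial (k + 1) : ℝ)) • A ^ k) i j =
      ∫ σ in (0:ℝ)..dt, (mexp (σ • A) i j -
        ∑ k ∈ Finset.range (η + 1), (Nat.factorial k : ℝ)⁻¹ * σ ^ k * (A ^ k) i j) := by
    rw [Matrix.sub_apply, intervalIntegral.integral_sub hg_int hP_int]
    congr 1
    rw [intervalIntegral.integral_finset_sum (fun k _ =>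
      ((by continuity : Continuous (fun σ : ℝ =>
        (Nat.factorial k : ℝ)⁻¹ * σ ^ k * (A ^ k) i j)).intervalIntegrable 0 dt))]
    rw [Matrix.sum_apply]
    apply Finset.sum_congr rfl
    intro k _
    rw [Matrix.smul_apply, smul_eq_mul, hpoly k]
  rw [hentry]
  have hbound := intervalIntegral.norm_integral_le_of_norm_le_const
    (C := Eexp A dt η i j) (a := (0:ℝ)) (b := dt)
    (f := fun σ : ℝ => mexp (σ • A) i j -
      ∑ k ∈ Finset.range (η + 1), (Nat.factorial k : ℝ)⁻¹ * σ ^ k * (A ^ k) i j) ?_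
  · rw [Real.norm_eq_abs] at hbound
    calc |∫ σ in (0:ℝ)..dt, (mexp (σ • A) i j -
        ∑ k ∈ Finset.range (η + 1), (Nat.factorial k : ℝ)⁻¹ * σ ^ k * (A ^ k) i j)|
        ≤ Eexp A dt η i j * |dt - 0| := hbound
      _ = dt * Eexp A dt η i j := by
          rw [sub_zero, abs_of_pos hdt]; ring
  · intro σ hσ
    rw [Set.uIoc_of_le hdt.le] at hσ
    rw [Real.norm_eq_abs]
    exact remainder_pointwise_bound A dt η σ ⟨hσ.1.le, hσ.2⟩ i j
end

section
/- Let U₀ ⊆ ℝ^n be a nonempty compact set, A ∈ ℝ^{n×n}, t ≥ 0, and let η ≥ 1 be an integer. For Δt > 0 set Ã_i = A^i·Δt^{i+1}/(i+1)!, D(Δt) = { Δt·M·u : M ∈ ℝ^{n×n} with |M| ≤ E(Δt,η) entrywise, u ∈ U₀ }, and define the one-step accumulating error ε̂(Δt) = err( e^{A·t}·( (Σ_{i=1}^{η} Ã_i)·U₀ ⊕ D(Δt) ) ) + err( e^{A·t}·( Ã_1·U₀ ⊕ … ⊕ Ã_η·U₀ ⊕ D(Δt) ) ). Then ε̂(Δt)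 → 0 as Δt → 0⁺ and ε̂(Δt) = O(Δt²) as Δt → 0⁺, i.e., there exist constants c > 0 and δ > 0 with ε̂(Δt) ≤ c·Δt² for all Δt ∈ (0,δ). -/
open scoped Pointwise

section Helpers

attribute [local instance] Matrix.linftyOpNormedRing Matrix.linftyOpNormedAlgebra

private lemma exp_remainder_bound' {𝔸 : Type*} [NormedRing 𝔸] [NormedAlgebra ℝ 𝔸]
    [CompleteSpace 𝔸] (x : 𝔸) (N : ℕ) (hN : 1 ≤ N) :
    ‖NormedSpace.exp x - ∑ i ∈ Finset.range N, ((Nat.factorial i : ℝ)⁻¹) • x ^ i‖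
      ≤ ‖x‖ ^ N * Real.exp ‖x‖ := by
  have hs : Summable (fun k : ℕ => ((k.factorial : ℝ)⁻¹) • x ^ k) :=
    NormedSpace.expSeries_summable' x
  have key : NormedSpace.exp x - ∑ i ∈ Finset.range N, ((Nat.factorial i : ℝ)⁻¹) • x ^ i
      = ∑' k : ℕ, ((Nat.factorial (k + N) : ℝ)⁻¹) • x ^ (k + N) := by
    rw [NormedSpace.exp_eq_tsum ℝ]
    simp only
    rw [← Summable.sum_add_tsum_nat_add N hs]
    abel
  rw [key]
  have hb : ∀ k : ℕ, ‖((Nat.factorial (k + N) : ℝ)⁻¹) • x ^ (k + N)‖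
      ≤ ‖x‖ ^ N * (‖x‖ ^ k / (Nat.factorial k : ℝ)) := by
    intro k
    rw [norm_smul]
    have h1 : ‖x ^ (k + N)‖ ≤ ‖x‖ ^ (k + N) := norm_pow_le' x (by omega)
    have h2 : ((Nat.factorial k : ℝ))⁻¹ ≥ ((Nat.factorial (k + N) : ℝ))⁻¹ := by
      apply inv_anti₀
      · exact_mod_cast Nat.factorial_pos k
      · exact_mod_cast Nat.factorial_le (by omega)
    have h3 : ‖((Nat.factorial (k + N) : ℝ)⁻¹)‖ = ((Nat.factorial (k + N) : ℝ))⁻¹ := by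
      rw [Real.norm_eq_abs, abs_of_nonneg]; positivity
    rw [h3]
    calc ((Nat.factorial (k + N) : ℝ))⁻¹ * ‖x ^ (k + N)‖
        ≤ ((Nat.factorial k : ℝ))⁻¹ * ‖x‖ ^ (k + N) :=
          mul_le_mul h2 h1 (norm_nonneg _) (by positivity)
      _ = ‖x‖ ^ N * (‖x‖ ^ k / (Nat.factorial k : ℝ)) := by rw [pow_add]; ring
  have hsb : Summable (fun k : ℕ => ‖x‖ ^ N * (‖x‖ ^ k / (Nat.factorial k : ℝ))) :=
    (Real.summable_pow_div_factorial ‖x‖).mul_left _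
  have hsn : Summable (fun k : ℕ => ‖((Nat.factorial (k + N) : ℝ)⁻¹) • x ^ (k + N)‖) :=
    Summable.of_nonneg_of_le (fun k => norm_nonneg _) hb hsb
  calc ‖∑' k : ℕ, ((Nat.factorial (k + N) : ℝ)⁻¹) • x ^ (k + N)‖
      ≤ ∑' k : ℕ, ‖((Nat.factorial (k + N) : ℝ)⁻¹) • x ^ (k + N)‖ :=
        norm_tsum_le_tsum_norm hsn
    _ ≤ ∑' k : ℕ, ‖x‖ ^ N * (‖x‖ ^ k / (Nat.factorial k : ℝ)) := Summable.tsum_le_tsum hb hsn hsb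
    _ = ‖x‖ ^ N * ∑' k : ℕ, (‖x‖ ^ k / (Nat.factorial k : ℝ)) := tsum_mul_left
    _ = ‖x‖ ^ N * Real.exp ‖x‖ := by
        rw [Real.exp_eq_exp_ℝ, NormedSpace.exp_eq_tsum_div]

private lemma linfty_norm_mono' {n : ℕ} {M P : Matrix (Fin n) (Fin n) ℝ}
    (h : ∀ i j, |M i j| ≤ P i j) : ‖M‖ ≤ ‖P‖ := by
  rw [Matrix.linfty_opNorm_def, Matrix.linfty_opNorm_def]
  norm_cast
  apply Finset.sup_mono_fun
  intro i _
  apply Finset.sum_le_sum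
  intro j _
  have h1 : |M i j| ≤ |P i j| := (h i j).trans (le_abs_self _)
  simpa [← NNReal.coe_le_coe, nnnorm, Real.norm_eq_abs] using h1

private lemma exists_mvE_bound' (n : ℕ) : ∃ C : ℝ, 0 ≤ C ∧
    ∀ (M : Matrix (Fin n) (Fin n) ℝ) (x : EuclideanSpace ℝ (Fin n)),
      ‖mvE M x‖ ≤ C * ‖M‖ * ‖x‖ := by
  let Φ : Matrix (Fin n) (Fin n) ℝ →ₗ[ℝ]
      (EuclideanSpace ℝ (Fin n) →L[ℝ] EuclideanSpace ℝ (Fin n)) :=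
    (LinearMap.toContinuousLinearMap.toLinearMap).comp
      (Matrix.toEuclideanLin (𝕜 := ℝ) (m := Fin n) (n := Fin n)).toLinearMap
  let Ψ := LinearMap.toContinuousLinearMap Φ
  refine ⟨@norm _ ContinuousLinearMap.hasOpNorm Ψ, Ψ.opNorm_nonneg, fun M x => ?_⟩
  have h1 : mvE M x = (Ψ M) x := rfl
  rw [h1]
  calc ‖(Ψ M) x‖ ≤ ‖Ψ M‖ * ‖x‖ := (Ψ M).le_opNorm x
    _ ≤ @norm _ ContinuousLinearMap.hasOpNorm Ψ * ‖M‖ * ‖x‖ := by gcongr; exact Ψ.le_opNorm M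

private lemma err_nonneg' {n : ℕ} (S : Set (EuclideanSpace ℝ (Fin n))) : 0 ≤ err S := by
  apply Real.sSup_nonneg
  rintro x ⟨y, -, rfl⟩
  exact norm_nonneg y

private lemma euclid_coord_le' {n : ℕ} (x : EuclideanSpace ℝ (Fin n)) (i : Fin n) :
    |x i| ≤ ‖x‖ := by
  rw [EuclideanSpace.norm_eq, ← Real.sqrt_sq_eq_abs]
  apply Real.sqrt_le_sqrt
  calc x i ^ 2 = ‖x i‖ ^ 2 := by rw [Real.norm_eq_abs, sq_abs]
    _ ≤ ∑ j, ‖x j‖ ^ 2 := Finset.single_le_sum (f := fun j => ‖x j‖ ^ 2)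
        (fun j _ => by positivity) (Finset.mem_univ i)

private lemma err_le_of_norm_le' {n : ℕ} (S : Set (EuclideanSpace ℝ (Fin n))) (r : ℝ)
    (hr : 0 ≤ r) (h : ∀ x ∈ S, ‖x‖ ≤ r) : err S ≤ Real.sqrt n * r := by
  apply Real.sSup_le _ (by positivity)
  rintro - ⟨y, hy, rfl⟩
  have hcoord : ∀ i, |y i| ≤ r := by
    intro i
    have h1 := hy i
    rcases S.eq_empty_or_nonempty with hS | hS
    · simp only [hS, Set.image_empty, Real.sInf_empty, Real.sSup_empty] at h1
      have : y i = 0 := le_antisymm h1.2 h1.1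
      rw [this]; simpa using hr
    · have him : ((fun y => y i) '' S).Nonempty := hS.image _
      have hub : ∀ z ∈ (fun y => y i) '' S, z ≤ r := by
        rintro - ⟨x, hx, rfl⟩
        exact (le_abs_self _).trans ((euclid_coord_le' x i).trans (h x hx))
      have hlb : ∀ z ∈ (fun y => y i) '' S, -r ≤ z := by
        rintro - ⟨x, hx, rfl⟩
        have := (euclid_coord_le' x i).trans (h x hx)
        linarith [(abs_le.mp this).1]
      have h2 : sSup ((fun y => y i) '' S) ≤ r := csSup_le him hub
      have h3 : -r ≤ sInf ((fun y => y i) '' S) := le_csInf him hlb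
      exact abs_le.mpr ⟨h3.trans h1.1, h1.2.trans h2⟩
  calc ‖y‖ = Real.sqrt (∑ i, ‖y i‖ ^ 2) := EuclideanSpace.norm_eq y
    _ ≤ Real.sqrt (∑ _i : Fin n, r ^ 2) := by
        apply Real.sqrt_le_sqrt
        apply Finset.sum_le_sum
        intro i _
        rw [Real.norm_eq_abs]
        exact pow_le_pow_left₀ (abs_nonneg _) (hcoord i) 2
    _ = Real.sqrt n * r := by
        rw [Finset.sum_const, Finset.card_univ, Fintype.card_fin, nsmul_eq_mul,
          Real.sqrt_mul (by positivity), Real.sqrt_sq hr]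

private lemma norm_le_of_mem_setSum' {n : ℕ} {ι : Type*} (s : Finset ι)
    (f : ι → Set (EuclideanSpace ℝ (Fin n))) (b : ι → ℝ)
    (hb : ∀ i ∈ s, ∀ y ∈ f i, ‖y‖ ≤ b i) :
    ∀ x ∈ ∑ i ∈ s, f i, ‖x‖ ≤ ∑ i ∈ s, b i := by
  induction s using Finset.cons_induction with
  | empty =>
      intro x hx
      simp only [Finset.sum_empty] at hx ⊢
      have : x = 0 := by simpa using hx
      simp [this]
  | cons a s ha ih =>
      intro x hx
      rw [Finset.sum_cons] at hx
      obtain ⟨u, hu, v, hv, hx⟩ := Set.mem_add.mp hx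
      subst hx
      rw [Finset.sum_cons]
      have h1 : ‖u‖ ≤ b a := hb a (Finset.mem_cons_self a s) u hu
      have h2 : ‖v‖ ≤ ∑ i ∈ s, b i :=
        ih (fun i hi => hb i (Finset.mem_cons_of_mem hi)) v hv
      calc ‖u + v‖ ≤ ‖u‖ + ‖v‖ := norm_add_le u v
        _ ≤ b a + ∑ i ∈ s, b i := add_le_add h1 h2

set_option maxHeartbeats 1600000 in
/-- the one-step accumulating error `ε̂(Δt)` tends to 0 and is `O(Δt²)`. -/
theorem ehatStep_limit_and_order {n : ℕ} (U0 : Set (EuclideanSpace ℝ (Fin n)))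
    (hne : U0.Nonempty) (hcomp : IsCompact U0) (A : Matrix (Fin n) (Fin n) ℝ)
    (t : ℝ) (ht : 0 ≤ t) (η : ℕ) (hη : 1 ≤ η) :
    Filter.Tendsto (fun dt => ehatStep A t η U0 dt)
      (nhdsWithin 0 (Set.Ioi 0)) (nhds 0) ∧
    ∃ c > (0 : ℝ), ∃ δ > (0 : ℝ), ∀ dt ∈ Set.Ioo (0 : ℝ) δ,
      ehatStep A t η U0 dt ≤ c * dt ^ 2 := by
  classical
  obtain ⟨C, hC0, hCb⟩ := exists_mvE_bound' n
  obtain ⟨r0', hr0'⟩ := hcomp.isBounded.exists_norm_le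
  set r1 : ℝ := max r0' 0 with hr1def
  have hr1 : 0 ≤ r1 := le_max_right _ _
  have hU : ∀ u ∈ U0, ‖u‖ ≤ r1 := fun u hu => (hr0' u hu).trans (le_max_left _ _)
  set sA : ℝ := ∑ i ∈ Finset.Icc 1 η, ‖A‖ ^ i with hsAdef
  have hsA : 0 ≤ sA := Finset.sum_nonneg fun i _ => by positivity
  set KE : ℝ := ‖entAbs A‖ ^ (η + 1) * Real.exp ‖entAbs A‖ with hKEdef
  have hKE : 0 ≤ KE := by rw [hKEdef]; positivity
  set cE : ℝ := ‖mexp (t • A)‖ with hcEdef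
  have hcE : 0 ≤ cE := norm_nonneg _
  set cb : ℝ := C * r1 * (sA + KE) with hcbdef
  have hcb : 0 ≤ cb := by rw [hcbdef]; positivity
  set c0 : ℝ := 2 * (Real.sqrt n * (C * cE * (cb * 1))) with hc0def
  have hc0 : 0 ≤ c0 := by rw [hc0def]; positivity
  have main : ∀ dt ∈ Set.Ioo (0 : ℝ) 1, ehatStep A t η U0 dt ≤ c0 * dt ^ 2 := by
    rintro dt ⟨hdt0, hdt1⟩
    have hEexp : ‖Eexp A dt η‖ ≤ dt ^ 2 * KE := by
      have h0 : Eexp A dt η = NormedSpace.exp (dt • entAbs A)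
          - ∑ i ∈ Finset.range (η + 1),
              ((Nat.factorial i : ℝ)⁻¹) • (dt • entAbs A) ^ i := rfl
      rw [h0]
      refine (exp_remainder_bound' (dt • entAbs A) (η + 1) (by omega)).trans ?_
      have hn : ‖dt • entAbs A‖ = dt * ‖entAbs A‖ := by
        rw [norm_smul, Real.norm_eq_abs, abs_of_pos hdt0]
      rw [hn, mul_pow]
      have e1 : dt ^ (η + 1) ≤ dt ^ 2 := pow_le_pow_of_le_one hdt0.le hdt1.le (by omega)
      have e2 : Real.exp (dt * ‖entAbs A‖) ≤ Real.exp ‖entAbs A‖ := by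
        apply Real.exp_le_exp.mpr
        nlinarith [norm_nonneg (entAbs A)]
      calc dt ^ (η + 1) * ‖entAbs A‖ ^ (η + 1) * Real.exp (dt * ‖entAbs A‖)
          ≤ dt ^ 2 * ‖entAbs A‖ ^ (η + 1) * Real.exp ‖entAbs A‖ :=
            mul_le_mul (mul_le_mul e1 le_rfl (by positivity) (by positivity)) e2
              (by positivity) (by positivity)
        _ = dt ^ 2 * KE := by rw [hKEdef]; ring
    have hD : ∀ x ∈ Dset A dt η U0, ‖x‖ ≤ C * r1 * KE * dt ^ 2 := by
      rintro x ⟨M, hM, u, hu, rfl⟩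
      have hMn : ‖M‖ ≤ dt ^ 2 * KE := (linfty_norm_mono' hM).trans hEexp
      calc ‖dt • mvE M u‖ = dt * ‖mvE M u‖ := by
            rw [norm_smul, Real.norm_eq_abs, abs_of_pos hdt0]
        _ ≤ dt * (C * ‖M‖ * ‖u‖) :=
            mul_le_mul_of_nonneg_left (hCb M u) hdt0.le
        _ ≤ 1 * (C * (dt ^ 2 * KE) * r1) := by
            apply mul_le_mul hdt1.le ?_ (by positivity) one_pos.le
            gcongr
            · exact hU u hu
        _ = C * r1 * KE * dt ^ 2 := by ring
    have hAt : ∀ i ∈ Finset.Icc 1 η, ‖Atilde A dt i‖ ≤ dt ^ 2 * ‖A‖ ^ i := by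
      intro i hi
      rw [Finset.mem_Icc] at hi
      have hp : ‖A ^ i‖ ≤ ‖A‖ ^ i := norm_pow_le' A (by omega)
      have heq : ‖Atilde A dt i‖
          = ‖(dt ^ (i + 1) / (Nat.factorial (i + 1) : ℝ))‖ * ‖A ^ i‖ := norm_smul _ _
      rw [heq]
      have h2 : ‖(dt ^ (i + 1) / (Nat.factorial (i + 1) : ℝ))‖ ≤ dt ^ 2 := by
        rw [Real.norm_eq_abs, abs_of_nonneg (by positivity)]
        calc dt ^ (i + 1) / (Nat.factorial (i + 1) : ℝ) ≤ dt ^ (i + 1) :=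
              div_le_self (by positivity)
                (by exact_mod_cast Nat.one_le_iff_ne_zero.mpr (Nat.factorial_ne_zero _))
          _ ≤ dt ^ 2 := pow_le_pow_of_le_one hdt0.le hdt1.le (by omega)
      exact mul_le_mul h2 hp (norm_nonneg _) (by positivity)
    have hB : ‖∑ i ∈ Finset.Icc 1 η, Atilde A dt i‖ ≤ dt ^ 2 * sA := by
      refine (norm_sum_le _ _).trans ?_
      rw [hsAdef, Finset.mul_sum]
      exact Finset.sum_le_sum hAt
    have himg : ∀ i ∈ Finset.Icc 1 η, ∀ y ∈ imgM (Atilde A dt i) U0,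
        ‖y‖ ≤ C * (dt ^ 2 * ‖A‖ ^ i) * r1 := by
      rintro i hi - ⟨u, hu, rfl⟩
      calc ‖mvE (Atilde A dt i) u‖ ≤ C * ‖Atilde A dt i‖ * ‖u‖ := hCb _ _
        _ ≤ C * (dt ^ 2 * ‖A‖ ^ i) * r1 := by
            gcongr
            · exact hAt i hi
            · exact hU u hu
    have hT1 : ∀ x ∈ imgM (∑ i ∈ Finset.Icc 1 η, Atilde A dt i) U0 + Dset A dt η U0,
        ‖x‖ ≤ cb * dt ^ 2 := by
      intro x hx
      obtain ⟨a, ha, b, hb, hx⟩ := Set.mem_add.mp hx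
      subst hx
      obtain ⟨u, hu, rfl⟩ := ha
      have h1 : ‖mvE (∑ i ∈ Finset.Icc 1 η, Atilde A dt i) u‖ ≤ C * (dt ^ 2 * sA) * r1 := by
        calc ‖mvE (∑ i ∈ Finset.Icc 1 η, Atilde A dt i) u‖
            ≤ C * ‖∑ i ∈ Finset.Icc 1 η, Atilde A dt i‖ * ‖u‖ := hCb _ _
          _ ≤ C * (dt ^ 2 * sA) * r1 := by
              gcongr
              · exact hU u hu
      have h2 := hD b hb
      have h3 : C * (dt ^ 2 * sA) * r1 + C * r1 * KE * dt ^ 2 = cb * dt ^ 2 := by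
        rw [hcbdef]; ring
      calc ‖mvE (∑ i ∈ Finset.Icc 1 η, Atilde A dt i) u + b‖
          ≤ ‖mvE (∑ i ∈ Finset.Icc 1 η, Atilde A dt i) u‖ + ‖b‖ := norm_add_le _ _
        _ ≤ C * (dt ^ 2 * sA) * r1 + C * r1 * KE * dt ^ 2 := add_le_add h1 h2
        _ = cb * dt ^ 2 := h3
    have hT2 : ∀ x ∈ (∑ i ∈ Finset.Icc 1 η, imgM (Atilde A dt i) U0) + Dset A dt η U0,
        ‖x‖ ≤ cb * dt ^ 2 := by
      intro x hx
      obtain ⟨a, ha, b, hb, hx⟩ := Set.mem_add.mp hx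
      subst hx
      have h1 : ‖a‖ ≤ ∑ i ∈ Finset.Icc 1 η, C * (dt ^ 2 * ‖A‖ ^ i) * r1 :=
        norm_le_of_mem_setSum' _ _ _ himg a ha
      have h1' : ∑ i ∈ Finset.Icc 1 η, C * (dt ^ 2 * ‖A‖ ^ i) * r1
          = C * (dt ^ 2 * sA) * r1 := by
        simp only [hsAdef, Finset.mul_sum, Finset.sum_mul]
      have h2 := hD b hb
      have h3 : C * (dt ^ 2 * sA) * r1 + C * r1 * KE * dt ^ 2 = cb * dt ^ 2 := by
        rw [hcbdef]; ring
      calc ‖a + b‖ ≤ ‖a‖ + ‖b‖ := norm_add_le _ _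
        _ ≤ C * (dt ^ 2 * sA) * r1 + C * r1 * KE * dt ^ 2 := by
            rw [← h1']; exact add_le_add h1 h2
        _ = cb * dt ^ 2 := h3
    have hS : ∀ T : Set (EuclideanSpace ℝ (Fin n)), (∀ x ∈ T, ‖x‖ ≤ cb * dt ^ 2) →
        err (imgM (mexp (t • A)) T) ≤ Real.sqrt n * (C * cE * (cb * dt ^ 2)) := by
      intro T hT
      apply err_le_of_norm_le' _ _ (by positivity)
      rintro - ⟨x, hx, rfl⟩
      calc ‖mvE (mexp (t • A)) x‖ ≤ C * ‖mexp (t • A)‖ * ‖x‖ := hCb _ _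
        _ ≤ C * cE * (cb * dt ^ 2) := by
            rw [← hcEdef]
            exact mul_le_mul_of_nonneg_left (hT x hx) (by positivity)
    have e1 := hS _ hT1
    have e2 := hS _ hT2
    have hfin : c0 * dt ^ 2 = Real.sqrt n * (C * cE * (cb * dt ^ 2))
        + Real.sqrt n * (C * cE * (cb * dt ^ 2)) := by rw [hc0def]; ring
    unfold ehatStep
    linarith
  constructor
  · apply squeeze_zero' (g := fun dt : ℝ => c0 * dt ^ 2)
    · exact Filter.Eventually.of_forall fun dt => by
        unfold ehatStep; exact add_nonneg (err_nonneg' _) (err_nonneg' _)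
    · exact Filter.eventually_of_mem (Ioo_mem_nhdsGT_of_mem (by simp)) main
    · have h : Filter.Tendsto (fun x : ℝ => c0 * x ^ 2) (nhdsWithin 0 (Set.Ioi 0))
          (nhds (c0 * 0 ^ 2)) :=
        ((continuous_const.mul (continuous_pow 2)).tendsto 0).mono_left nhdsWithin_le_nhds
      simpa using h
  · refine ⟨c0 + 1, by linarith, 1, one_pos, fun dt hdt => ?_⟩
    have h1 := main dt hdt
    nlinarith [sq_nonneg dt]

end Helpers
end
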